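/- Let (Ω,μ) be a probability space, 0 < q < p < ∞, 1/r = 1/q - 1/p, and 𝓕 a family of nonnegative measurable functions in L_{q,∞}. If there exist a constant C and a positive measurable g with ‖g‖_{r,∞} = 1 and sup_{f∈𝓕} ‖f/g‖_{p,∞} ≤ C, then for every 0 < δ < 1 there exists a measurable set E_δ with μ(E_δ) ≥ 1 - δ and sup_{f∈𝓕} ‖1_{E_δ} f‖_{p,∞} ≤ C' δ^{-1/r} for a constant C' depending only on C, p, q. -/

import Mathlib

open MeasureTheory ENNReal Filter

/-- The weak-`L_s` quasi-norm `‖f‖_{s,∞} = sup_{t>0} t · μ({|f| > t})^{1/s}`. -/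
noncomputable def weakNorm {Ω : Type*} [MeasurableSpace Ω] (μ : Measure Ω) (s : ℝ)
    (f : Ω → ℝ) : ℝ≥0∞ :=
  ⨆ (t : ℝ) (_ : 0 < t), ENNReal.ofReal t * μ {ω | t < |f ω|} ^ (1 / s)

/-- N1 ⇒ N3 of the extended Nikishin theorem: if `‖g‖_{r,∞} = 1` and
`sup_{f∈𝓕} ‖f/g‖_{p,∞} ≤ C`, then for every `0 < δ < 1` there is a set `E_δ` with
`μ(E_δ) ≥ 1 - δ` and `sup_{f∈𝓕} ‖1_{E_δ} f‖_{p,∞} ≤ C' δ^{-1/r}`, where `C'` depends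
only on `C, p, q`. -/
theorem nikishin_N1_implies_N3 (q p r C : ℝ) (hq : 0 < q) (hqp : q < p)
    (hr : 1 / r = 1 / q - 1 / p) (hC : 0 < C) :
    ∃ C' : ℝ, 0 < C' ∧
      ∀ (Ω : Type) (_ : MeasurableSpace Ω) (μ : Measure Ω), IsProbabilityMeasure μ →
      ∀ 𝓕 : Set (Ω → ℝ), (∀ f ∈ 𝓕, Measurable f ∧ (∀ ω, 0 ≤ f ω) ∧ weakNorm μ q f < ⊤) →
      ∀ g : Ω → ℝ, Measurable g → (∀ ω, 0 < g ω) → weakNorm μ r g = 1 →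
        (∀ f ∈ 𝓕, weakNorm μ p (fun ω => f ω / g ω) ≤ ENNReal.ofReal C) →
      ∀ δ : ℝ, 0 < δ → δ < 1 →
        ∃ E : Set Ω, MeasurableSet E ∧ 1 - ENNReal.ofReal δ ≤ μ E ∧
          ∀ f ∈ 𝓕, weakNorm μ p (E.indicator f) ≤ ENNReal.ofReal (C' * δ ^ (-(1 / r))) := by
  have hp : 0 < p := lt_trans hq hqp
  have hr1 : 0 < 1 / r := by
    rw [hr]
    have : 1 / p < 1 / q := one_div_lt_one_div_of_lt hq hqp
    linarith
  have hr0 : 0 < r := one_div_pos.mp hr1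
  refine ⟨C, hC, ?_⟩
  intro Ω _ μ hμ 𝓕 h𝓕 g hg hgpos hwg hsup δ hδ hδ1
  set t0 : ℝ := δ ^ (-(1 / r)) with ht0def
  have ht0 : 0 < t0 := Real.rpow_pos_of_pos hδ _
  have hEmeas : MeasurableSet {ω | g ω ≤ t0} := hg measurableSet_Iic
  -- key estimate: μ {t0 < g} ≤ δ
  have hkey : μ {ω | t0 < g ω} ≤ ENNReal.ofReal δ := by
    have hle : ENNReal.ofReal t0 * μ {ω | t0 < |g ω|} ^ (1 / r) ≤ 1 := by
      rw [← hwg]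
      exact le_iSup₂ (f := fun t (_ : 0 < t) =>
        ENNReal.ofReal t * μ {ω | t < |g ω|} ^ (1 / r)) t0 ht0
    have habs : {ω | t0 < |g ω|} = {ω | t0 < g ω} := by
      ext ω; simp [abs_of_pos (hgpos ω)]
    rw [habs] at hle
    set A := μ {ω | t0 < g ω} with hA
    set D := ENNReal.ofReal δ with hD
    have hD0 : D ≠ 0 := by simp [hD, hδ]
    have hDtop : D ≠ ⊤ := ofReal_ne_top
    have ht0D : ENNReal.ofReal t0 = D ^ (-(1 / r)) := by
      rw [hD, ← ENNReal.ofReal_rpow_of_pos hδ]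
    rw [ht0D] at hle
    have h1 : A ^ (1 / r) ≤ D ^ (1 / r) := by
      have hne : D ^ (-(1 / r)) ≠ 0 := by
        simp [ENNReal.rpow_eq_zero_iff, hD0, hDtop]
      have hnetop : D ^ (-(1 / r)) ≠ ⊤ := by
        simp [ENNReal.rpow_eq_top_iff, hD0, hDtop]
      calc A ^ (1 / r) = (D ^ (-(1 / r)))⁻¹ * (D ^ (-(1 / r)) * A ^ (1 / r)) := by
            rw [← mul_assoc, ENNReal.inv_mul_cancel hne hnetop, one_mul]
        _ ≤ (D ^ (-(1 / r)))⁻¹ * 1 := mul_le_mul_right hle _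
        _ = D ^ (1 / r) := by
            rw [mul_one, ← ENNReal.rpow_neg, neg_neg]
    have h2 : (A ^ (1 / r)) ^ r ≤ (D ^ (1 / r)) ^ r :=
      ENNReal.rpow_le_rpow h1 hr0.le
    rwa [← ENNReal.rpow_mul, ← ENNReal.rpow_mul, one_div_mul_cancel hr0.ne',
      ENNReal.rpow_one, ENNReal.rpow_one] at h2
  refine ⟨{ω | g ω ≤ t0}, hEmeas, ?_, ?_⟩
  · have hc : {ω | g ω ≤ t0}ᶜ = {ω | t0 < g ω} := by
      ext ω; simp [not_le]
    have := measure_add_measure_compl (μ := μ) hEmeas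
    rw [hc] at this
    rw [tsub_le_iff_right]
    calc (1 : ℝ≥0∞) = μ {ω | g ω ≤ t0} + μ {ω | t0 < g ω} := by
          rw [this, measure_univ]
      _ ≤ μ {ω | g ω ≤ t0} + ENNReal.ofReal δ := add_le_add_right hkey _
  · intro f hf
    obtain ⟨hfm, hfnn, -⟩ := h𝓕 f hf
    rw [weakNorm]
    refine iSup₂_le fun t ht => ?_
    set s : ℝ := t * δ ^ (1 / r) with hs
    have hd1 : (0:ℝ) < δ ^ (1 / r) := Real.rpow_pos_of_pos hδ _
    have hspos : 0 < s := mul_pos ht hd1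
    have hdinv : δ ^ (1 / r) * t0 = 1 := by
      rw [ht0def, ← Real.rpow_add hδ, add_neg_cancel, Real.rpow_zero]
    have hsubset : {ω | t < |Set.indicator {ω | g ω ≤ t0} f ω|}
        ⊆ {ω | s < |f ω / g ω|} := by
      intro ω hω
      simp only [Set.mem_setOf_eq] at hω ⊢
      by_cases hωE : g ω ≤ t0
      · have hind : Set.indicator {ω | g ω ≤ t0} f ω = f ω :=
          Set.indicator_of_mem (show ω ∈ {ω | g ω ≤ t0} from hωE) f
        rw [hind, abs_of_nonneg (hfnn ω)] at hω
        rw [abs_of_nonneg (div_nonneg (hfnn ω) (hgpos ω).le)]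
        rw [lt_div_iff₀ (hgpos ω)]
        calc s * g ω ≤ s * t0 := by
              exact mul_le_mul_of_nonneg_left hωE hspos.le
          _ = t * (δ ^ (1 / r) * t0) := by ring
          _ = t := by rw [hdinv, mul_one]
          _ < f ω := hω
      · have hind : Set.indicator {ω | g ω ≤ t0} f ω = 0 :=
          Set.indicator_of_notMem (show ω ∉ {ω | g ω ≤ t0} from hωE) f
        rw [hind] at hω
        simp at hω
        exact absurd hω (not_lt.mpr ht.le)
    have hmono : μ {ω | t < |Set.indicator {ω | g ω ≤ t0} f ω|} ^ (1 / p)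
        ≤ μ {ω | s < |f ω / g ω|} ^ (1 / p) :=
      ENNReal.rpow_le_rpow (measure_mono hsubset) (by positivity)
    calc ENNReal.ofReal t * μ {ω | t < |Set.indicator {ω | g ω ≤ t0} f ω|} ^ (1 / p)
        ≤ ENNReal.ofReal t * μ {ω | s < |f ω / g ω|} ^ (1 / p) :=
          mul_le_mul_right hmono _
      _ = ENNReal.ofReal (δ ^ (-(1 / r))) *
          (ENNReal.ofReal s * μ {ω | s < |f ω / g ω|} ^ (1 / p)) := by
          rw [← mul_assoc, ← ENNReal.ofReal_mul (Real.rpow_pos_of_pos hδ _).le]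
          congr 2
          rw [hs, ← mul_assoc, mul_comm (δ ^ (-(1/r))) t, mul_assoc]
          rw [← Real.rpow_add hδ, neg_add_cancel, Real.rpow_zero, mul_one]
      _ ≤ ENNReal.ofReal (δ ^ (-(1 / r))) * ENNReal.ofReal C := by
          refine mul_le_mul_right ?_ _
          refine le_trans ?_ (hsup f hf)
          exact le_iSup₂ (f := fun u (_ : 0 < u) =>
            ENNReal.ofReal u * μ {ω | u < |f ω / g ω|} ^ (1 / p)) s hspos
      _ = ENNReal.ofReal (C * δ ^ (-(1 / r))) := by
          rw [← ENNReal.ofReal_mul (Real.rpow_pos_of_pos hδ _).le, mul_comm]
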